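/- The number x = Σ_{k=1}^∞ ε_k/(q_1 q_2 ⋯ q_k) is rational if and only if there exist a real constant c and a strictly increasing sequence (n_k) of nonnegative integers such that σ^{n_k}(x) = c for every k (i.e., the shifts σ^n(x) take some value for infinitely many indices n). -/

import Mathlib

/-- The `n`-th shift `σ^n(x) = Σ_{k=n+1}^∞ ε_k/(q_{n+1} q_{n+2} ⋯ q_k)` of the Cantor
series with bases `q` and digits `ε`; in particular `σ^0(x) = x`. -/
noncomputable def cantorShift (q ε : ℕ → ℕ) (n : ℕ) : ℝ :=
  ∑' k : ℕ, (ε (n + k + 1) : ℝ) / ∏ i ∈ Finset.Icc (n + 1) (n + k + 1), (q i : ℝ)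

section aux
variable {q ε : ℕ → ℕ}

lemma cs_prod_ge (hq : ∀ k, 1 ≤ k → 2 ≤ q k) (m n : ℕ) : (2:ℝ)^(Finset.Icc (m+1) n).card ≤ ∏ i ∈ Finset.Icc (m+1) n, (q i : ℝ) := by
  rw [← Finset.prod_const]
  apply Finset.prod_le_prod (by intros; positivity)
  intro i hi
  exact_mod_cast hq i (le_trans (Nat.le_add_left 1 m) (Finset.mem_Icc.mp hi).1)

lemma cs_prod_pos (hq : ∀ k, 1 ≤ k → 2 ≤ q k) (m n : ℕ) : 0 < ∏ i ∈ Finset.Icc (m+1) n, (q i : ℝ) :=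
  lt_of_lt_of_le (by positivity) (cs_prod_ge hq m n)

lemma cs_term_nonneg (hq : ∀ k, 1 ≤ k → 2 ≤ q k) (n k : ℕ) :
    0 ≤ (ε (n + k + 1) : ℝ) / ∏ i ∈ Finset.Icc (n + 1) (n + k + 1), (q i : ℝ) := by
  have := cs_prod_pos hq n (n+k+1)
  positivity

lemma cs_term_le (hq : ∀ k, 1 ≤ k → 2 ≤ q k) (hε : ∀ k, 1 ≤ k → ε k ≤ q k - 1) (n k : ℕ) :
    (ε (n + k + 1) : ℝ) / ∏ i ∈ Finset.Icc (n + 1) (n + k + 1), (q i : ℝ) ≤ (1/2)^k := by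
  have hP : (0:ℝ) < ∏ i ∈ Finset.Icc (n + 1) (n + k), (q i : ℝ) := cs_prod_pos hq n (n+k)
  have hqpos : (0:ℝ) < (q (n+k+1) : ℝ) := by
    have := hq (n+k+1) (by omega); positivity
  have hsplit : ∏ i ∈ Finset.Icc (n + 1) (n + k + 1), (q i : ℝ)
      = (∏ i ∈ Finset.Icc (n + 1) (n + k), (q i : ℝ)) * (q (n+k+1) : ℝ) := by
    exact Finset.prod_Icc_succ_top (by omega) _
  have hεle : (ε (n + k + 1) : ℝ) ≤ (q (n+k+1) : ℝ) := by
    have h1 := hε (n+k+1) (by omega)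
    have h2 := hq (n+k+1) (by omega)
    exact_mod_cast le_trans h1 (Nat.sub_le _ _)
  rw [hsplit]
  have hcard : (Finset.Icc (n+1) (n+k)).card = k := by
    rw [Nat.card_Icc]; omega
  have h2k : (2:ℝ)^k ≤ ∏ i ∈ Finset.Icc (n + 1) (n + k), (q i : ℝ) := by
    have := cs_prod_ge hq n (n+k); rwa [hcard] at this
  calc (ε (n + k + 1) : ℝ) / ((∏ i ∈ Finset.Icc (n + 1) (n + k), (q i : ℝ)) * (q (n+k+1) : ℝ))
      ≤ (q (n+k+1) : ℝ) / ((2:ℝ)^k * (q (n+k+1) : ℝ)) := by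
        apply div_le_div₀ hqpos.le hεle (by positivity)
        exact mul_le_mul_of_nonneg_right h2k hqpos.le
    _ = (1/2)^k := by
        rw [mul_comm, ← div_div, div_self hqpos.ne']
        simp [one_div, inv_pow]

lemma cs_summable (hq : ∀ k, 1 ≤ k → 2 ≤ q k) (hε : ∀ k, 1 ≤ k → ε k ≤ q k - 1) (n : ℕ) :
    Summable (fun k : ℕ => (ε (n + k + 1) : ℝ) / ∏ i ∈ Finset.Icc (n + 1) (n + k + 1), (q i : ℝ)) := by
  apply Summable.of_nonneg_of_le (fun k => cs_term_nonneg hq n k) (fun k => cs_term_le hq hε n k)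
  exact summable_geometric_of_lt_one (by norm_num : (0:ℝ) ≤ 1/2) (by norm_num)

lemma cs_nonneg (hq : ∀ k, 1 ≤ k → 2 ≤ q k) (n : ℕ) : 0 ≤ cantorShift q ε n :=
  tsum_nonneg (fun k => cs_term_nonneg hq n k)

lemma cs_le_two (hq : ∀ k, 1 ≤ k → 2 ≤ q k) (hε : ∀ k, 1 ≤ k → ε k ≤ q k - 1) (n : ℕ) : cantorShift q ε n ≤ 2 := by
  have h := Summable.tsum_le_tsum (fun k => cs_term_le hq hε n k) (cs_summable hq hε n)
    (summable_geometric_of_lt_one (by norm_num : (0:ℝ) ≤ 1/2) (by norm_num))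
  calc cantorShift q ε n ≤ ∑' k : ℕ, ((1:ℝ)/2)^k := h
    _ = 2 := by rw [tsum_geometric_of_lt_one (by norm_num : (0:ℝ) ≤ 1/2) (by norm_num)]; norm_num

lemma cs_rec (hq : ∀ k, 1 ≤ k → 2 ≤ q k) (hε : ∀ k, 1 ≤ k → ε k ≤ q k - 1) (n : ℕ) :
    cantorShift q ε n = ((ε (n+1) : ℝ) + cantorShift q ε (n+1)) / (q (n+1) : ℝ) := by
  have hqpos : (0:ℝ) < (q (n+1) : ℝ) := by have := hq (n+1) (by omega); positivity
  have hsum := cs_summable hq hε n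
  rw [cantorShift, Summable.tsum_eq_zero_add hsum]
  have h0 : (ε (n + 0 + 1) : ℝ) / ∏ i ∈ Finset.Icc (n + 1) (n + 0 + 1), (q i : ℝ)
      = (ε (n+1) : ℝ) / (q (n+1) : ℝ) := by
    norm_num
  have hterm : ∀ k : ℕ, (ε (n + (k+1) + 1) : ℝ) / ∏ i ∈ Finset.Icc (n + 1) (n + (k+1) + 1), (q i : ℝ)
      = (1 / (q (n+1):ℝ)) * ((ε ((n+1) + k + 1) : ℝ) / ∏ i ∈ Finset.Icc ((n+1) + 1) ((n+1) + k + 1), (q i : ℝ)) := by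
    intro k
    have hpr : ∏ i ∈ Finset.Icc (n + 1) (n + (k+1) + 1), (q i : ℝ)
        = (q (n+1) : ℝ) * ∏ i ∈ Finset.Icc (n + 2) (n + k + 2), (q i : ℝ) := by
      rw [← Finset.Ico_add_one_right_eq_Icc, Finset.prod_eq_prod_Ico_succ_bot (by omega), ← Finset.Ico_add_one_right_eq_Icc]
      congr 1
    rw [hpr]
    have : (n+1) + k + 1 = n + k + 2 := by ring
    rw [this]
    have : (n+1) + 1 = n + 2 := by ring
    rw [this]
    have : n + (k+1) + 1 = n + k + 2 := by ring
    rw [this]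
    push_cast
    field_simp
  rw [tsum_congr hterm, tsum_mul_left, h0]
  show (ε (n + 1):ℝ) / (q (n + 1):ℝ) + 1 / (q (n + 1):ℝ) * cantorShift q ε (n + 1)
      = ((ε (n + 1):ℝ) + cantorShift q ε (n + 1)) / (q (n + 1):ℝ)
  field_simp

lemma cs_prodQ_pos (hq : ∀ k, 1 ≤ k → 2 ≤ q k) (m n : ℕ) :
    0 < ∏ i ∈ Finset.Icc (m+1) n, (q i : ℚ) := by
  apply Finset.prod_pos
  intro i hi
  have := hq i (le_trans (Nat.le_add_left 1 m) (Finset.mem_Icc.mp hi).1)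
  positivity

lemma cs_prodQ_gt_one (hq : ∀ k, 1 ≤ k → 2 ≤ q k) {m n : ℕ} (h : m < n) :
    1 < ∏ i ∈ Finset.Icc (m+1) n, (q i : ℚ) := by
  have hcard : (Finset.Icc (m+1) n).card = n - m := by rw [Nat.card_Icc]; omega
  calc (1:ℚ) < 2^(n-m) := by
        apply one_lt_pow₀ (by norm_num); omega
    _ = ∏ i ∈ Finset.Icc (m+1) n, (2:ℚ) := by rw [Finset.prod_const, hcard]
    _ ≤ ∏ i ∈ Finset.Icc (m+1) n, (q i : ℚ) := by
        apply Finset.prod_le_prod (by intros; norm_num)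
        intro i hi
        exact_mod_cast hq i (le_trans (Nat.le_add_left 1 m) (Finset.mem_Icc.mp hi).1)

lemma cs_key (hq : ∀ k, 1 ≤ k → 2 ≤ q k) (hε : ∀ k, 1 ≤ k → ε k ≤ q k - 1)
    {m n : ℕ} (h : m ≤ n) :
    ∃ r : ℚ, cantorShift q ε m
      = (r : ℝ) + ((∏ i ∈ Finset.Icc (m+1) n, (q i : ℚ))⁻¹ : ℚ) * cantorShift q ε n := by
  induction n, h using Nat.le_induction with
  | base =>
      refine ⟨0, ?_⟩
      rw [Finset.Icc_eq_empty (by omega), Finset.prod_empty]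
      push_cast; ring
  | succ n hmn ih =>
      obtain ⟨r, hr⟩ := ih
      have hq1 : (0:ℚ) < (q (n+1) : ℚ) := by
        have := hq (n+1) (by omega); positivity
      have hP : (0:ℚ) < ∏ i ∈ Finset.Icc (m+1) n, (q i : ℚ) := cs_prodQ_pos hq m n
      refine ⟨r + (ε (n+1) : ℚ) / ((∏ i ∈ Finset.Icc (m+1) n, (q i : ℚ)) * (q (n+1):ℚ)), ?_⟩
      rw [hr, cs_rec hq hε n]
      rw [Finset.prod_Icc_succ_top (by omega : m + 1 ≤ n + 1)]
      push_cast
      field_simp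
      ring
end aux

/-- `x = Σ_{k=1}^∞ ε_k/(q_1 ⋯ q_k)` is rational iff the shifts `σ^n(x)`
take some constant value `c` along a strictly increasing sequence of indices `(n_k)`,
i.e. some value is attained for infinitely many indices `n`. -/
theorem cantor_rational_iff_shift_const_subseq
    (q : ℕ → ℕ) (hq : ∀ k, 1 ≤ k → 2 ≤ q k)
    (ε : ℕ → ℕ) (hε : ∀ k, 1 ≤ k → ε k ≤ q k - 1)
    (x : ℝ) (hx : x = cantorShift q ε 0) :
    (∃ a : ℚ, x = (a : ℝ)) ↔
    (∃ c : ℝ, ∃ nk : ℕ → ℕ, StrictMono nk ∧ ∀ k, cantorShift q ε (nk k) = c) := by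
  constructor
  · rintro ⟨a, rfl⟩
    set b : ℤ := (a.den : ℤ) with hb
    have hb0 : (0:ℝ) < (b:ℝ) := by
      rw [hb]; exact_mod_cast a.pos
    have hrep : ∀ n, ∃ z : ℤ, cantorShift q ε n = (z : ℝ) / (b : ℝ) := by
      intro n
      induction n with
      | zero =>
          exact ⟨a.num, by rw [← hx, Rat.cast_def]; norm_cast⟩
      | succ n ih =>
          obtain ⟨z, hz⟩ := ih
          have hq1 : (0:ℝ) < (q (n+1) : ℝ) := by
            have := hq (n+1) (by omega); positivity
          refine ⟨(q (n+1) : ℤ) * z - (ε (n+1) : ℤ) * b, ?_⟩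
          have hrec := cs_rec hq hε n
          rw [hz] at hrec
          have : cantorShift q ε (n+1) = (q (n+1) : ℝ) * ((z:ℝ)/(b:ℝ)) - (ε (n+1) : ℝ) := by
            field_simp at hrec ⊢
            linarith
          rw [this]
          push_cast
          field_simp
    choose g hg using hrep
    have hgmem : ∀ n, g n ∈ Finset.Icc (0:ℤ) (2*b) := by
      intro n
      rw [Finset.mem_Icc]
      have h0 : 0 ≤ (g n : ℝ) / (b:ℝ) := (hg n) ▸ cs_nonneg hq n
      have h2 : (g n : ℝ) / (b:ℝ) ≤ 2 := (hg n) ▸ cs_le_two hq hε n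
      constructor
      · have : (0:ℝ) ≤ (g n : ℝ) := by
          by_contra hcon
          push_neg at hcon
          nlinarith [div_neg_of_neg_of_pos hcon hb0]
        exact_mod_cast this
      · have : (g n : ℝ) ≤ 2 * (b:ℝ) := by
          rw [div_le_iff₀ hb0] at h2; linarith
        exact_mod_cast this
    have : ∃ y : (Finset.Icc (0:ℤ) (2*b)),
        ((fun n => (⟨g n, hgmem n⟩ : (Finset.Icc (0:ℤ) (2*b)))) ⁻¹' {y}).Infinite := by
      obtain ⟨y, hy⟩ := Finite.exists_infinite_fiber
        (fun n => (⟨g n, hgmem n⟩ : (Finset.Icc (0:ℤ) (2*b))))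
      exact ⟨y, Set.infinite_coe_iff.mp hy⟩
    obtain ⟨y, hy⟩ := this
    have hS : {n | g n = (y:ℤ)}.Infinite := by
      apply Set.Infinite.mono ?_ hy
      intro n hn
      simp only [Set.mem_preimage, Set.mem_singleton_iff] at hn
      exact congrArg Subtype.val hn
    refine ⟨((y:ℤ):ℝ) / (b:ℝ), Nat.nth (fun n => g n = (y:ℤ)), Nat.nth_strictMono hS, ?_⟩
    intro k
    have hmem := Nat.nth_mem_of_infinite hS k
    rw [hg, hmem]
  · rintro ⟨c, nk, hmono, hc⟩
    obtain ⟨r, hr⟩ := cs_key hq hε (Nat.zero_le (nk 0))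
    obtain ⟨r', hr'⟩ := cs_key hq hε (le_of_lt (hmono (Nat.lt_succ_self 0)))
    rw [hc 0] at hr
    rw [hc 0, hc 1] at hr'
    set Q : ℚ := ∏ i ∈ Finset.Icc (nk 0 + 1) (nk 1), (q i : ℚ) with hQ
    have hQ1 : 1 < Q := cs_prodQ_gt_one hq (hmono (Nat.lt_succ_self 0))
    have hne : (1:ℚ) - Q⁻¹ ≠ 0 := by
      have h1 : Q⁻¹ < 1 := by
        rw [inv_lt_one_iff₀]; right; exact hQ1
      intro hcon
      have := sub_eq_zero.mp hcon
      rw [← this] at h1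
      exact lt_irrefl _ h1
    set c₀ : ℚ := r' / (1 - Q⁻¹) with hc₀
    have hcc : c = (c₀ : ℝ) := by
      have heq : c = (r' : ℝ) + ((Q⁻¹ : ℚ) : ℝ) * c := hr'
      have hcast : (((1:ℚ) - Q⁻¹ : ℚ) : ℝ) ≠ 0 := by exact_mod_cast hne
      push_cast at heq hcast
      rw [hc₀]
      push_cast
      rw [eq_div_iff hcast]
      linear_combination heq
    refine ⟨r + (∏ i ∈ Finset.Icc (0+1) (nk 0), (q i : ℚ))⁻¹ * c₀, ?_⟩
    rw [hx, hr, hcc]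
    push_cast
    ring
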